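/- Let r ≥ 3, t ≥ 1, and let n, k satisfy n ≥ 2k − t. Then every r-wise t-intersecting family 𝓕 of k-element subsets of [n] satisfies |𝓕| ≤ Σ_{i=0}^{t} C(t,i)·C(n−t, k−t−(r−1)i), where C(n−t, m) is interpreted as 0 when m < 0. -/

import Mathlib

/-- A family `𝓕` is `r`-wise `t`-intersecting if any `r` (not necessarily distinct)
members have at least `t` common elements. -/
def RwiseIntersecting (r t : ℕ) (𝓕 : Finset (Finset ℕ)) : Prop :=
  ∀ G : Fin r → Finset ℕ, (∀ i, G i ∈ 𝓕) → t ≤ (⋂ i, ((G i : Finset ℕ) : Set ℕ)).ncard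

open Finset

def Shifted (𝓕 : Finset (Finset ℕ)) : Prop :=
  ∀ i j A, 1 ≤ i → i < j → A ∈ 𝓕 → j ∈ A → i ∉ A → insert i (A.erase j) ∈ 𝓕


open Finset

-- (q+1)-th smallest of C is ≤ M if C ∩ [1,M] has ≥ q+1 elements
lemma enum_le_of_card_inter {C : Finset ℕ} {c : ℕ} (hc : C.card = c) (q : Fin c) {M : ℕ}
    (h : (q : ℕ) + 1 ≤ (C ∩ Finset.Icc 1 M).card) : C.orderEmbOfFin hc q ≤ M := by
  by_contra h'
  push_neg at h'
  have hsub : C ∩ Finset.Icc 1 M ⊆ (Finset.Iio q).image (C.orderEmbOfFin hc) := by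
    intro z hz
    rw [Finset.mem_inter, Finset.mem_Icc] at hz
    obtain ⟨i, hi⟩ : ∃ i, C.orderEmbOfFin hc i = z := by
      have := Finset.range_orderEmbOfFin C hc
      have hz' : z ∈ Set.range (C.orderEmbOfFin hc) := this ▸ hz.1
      exact hz'
    refine Finset.mem_image.2 ⟨i, ?_, hi⟩
    rw [Finset.mem_Iio]
    by_contra hqi
    push_neg at hqi
    have := (C.orderEmbOfFin hc).monotone hqi
    omega
  have := Finset.card_le_card hsub
  have h2 := Finset.card_image_le (f := C.orderEmbOfFin hc) (s := Finset.Iio q)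
  rw [Fin.card_Iio] at h2
  omega

-- (s+1)-th smallest of F is > M if F ∩ [1,M] has ≤ s elements (elements of F positive)
lemma lt_enum_of_card_inter {F : Finset ℕ} {k : ℕ} (hk : F.card = k) (s : Fin k) {M : ℕ}
    (hpos : ∀ x ∈ F, 1 ≤ x)
    (h : (F ∩ Finset.Icc 1 M).card ≤ (s : ℕ)) : M < F.orderEmbOfFin hk s := by
  by_contra h'
  push_neg at h'
  have hsub : (Finset.Iic s).image (F.orderEmbOfFin hk) ⊆ F ∩ Finset.Icc 1 M := by
    intro z hz
    rw [Finset.mem_image] at hz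
    obtain ⟨i, hi, rfl⟩ := hz
    rw [Finset.mem_Iic] at hi
    have hmem := Finset.orderEmbOfFin_mem F hk i
    refine Finset.mem_inter.2 ⟨hmem, Finset.mem_Icc.2 ⟨hpos _ hmem, le_trans ((F.orderEmbOfFin hk).monotone hi) h'⟩⟩
  have hcard : ((Finset.Iic s).image (F.orderEmbOfFin hk)).card = (s : ℕ) + 1 := by
    rw [Finset.card_image_of_injective _ (F.orderEmbOfFin hk).injective, Fin.card_Iic]
  have := Finset.card_le_card hsub
  omega


open Finset

/-- single-set compression: replace j by i -/
def swp (i j : ℕ) (A : Finset ℕ) : Finset ℕ :=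
  if j ∈ A ∧ i ∉ A then insert i (A.erase j) else A

/-- family compression -/
def SwpFam (i j : ℕ) (𝓕 : Finset (Finset ℕ)) : Finset (Finset ℕ) :=
  (𝓕.filter (fun A => swp i j A ∈ 𝓕)) ∪ (𝓕.filter (fun A => swp i j A ∉ 𝓕)).image (swp i j)

variable {i j : ℕ} {𝓕 : Finset (Finset ℕ)}

lemma cmp_of_pos {A : Finset ℕ} (h1 : j ∈ A) (h2 : i ∉ A) : swp i j A = insert i (A.erase j) := by
  simp [swp, h1, h2]

lemma cmp_of_neg {A : Finset ℕ} (h : ¬(j ∈ A ∧ i ∉ A)) : swp i j A = A := by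
  simp only [swp, if_neg h]

lemma cmp_card (hij : i ≠ j) (A : Finset ℕ) : (swp i j A).card = A.card := by
  unfold swp
  split_ifs with h
  · rw [Finset.card_insert_of_notMem (fun hi => h.2 (Finset.mem_of_mem_erase hi)),
      Finset.card_erase_of_mem h.1]
    have : 0 < A.card := Finset.card_pos.2 ⟨j, h.1⟩
    omega
  · rfl

lemma cmp_ne_self {A : Finset ℕ} (hij : i ≠ j) (h1 : j ∈ A) (h2 : i ∉ A) : swp i j A ≠ A := by
  rw [cmp_of_pos h1 h2]
  intro hEq
  have : j ∈ insert i (A.erase j) := by rw [hEq]; exact h1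
  simp only [Finset.mem_insert, Finset.mem_erase] at this
  rcases this with h | h
  · exact hij h.symm
  · exact h.1 rfl

lemma cmp_injOn (hij : i ≠ j) : Set.InjOn (swp i j) {A | j ∈ A ∧ i ∉ A} := by
  intro A hA B hB hEq
  rw [Set.mem_setOf_eq] at hA hB
  rw [cmp_of_pos hA.1 hA.2, cmp_of_pos hB.1 hB.2] at hEq
  ext x
  by_cases hx : x = i
  · subst hx; simp [hA.2, hB.2]
  by_cases hx' : x = j
  · subst hx'; simp [hA.1, hB.1]
  · have : x ∈ insert i (A.erase j) ↔ x ∈ insert i (B.erase j) := by rw [hEq]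
    simpa [hx, hx'] using this

lemma mem_Cmp {B : Finset ℕ} :
    B ∈ SwpFam i j 𝓕 ↔ (B ∈ 𝓕 ∧ swp i j B ∈ 𝓕) ∨ (B ∉ 𝓕 ∧ ∃ A ∈ 𝓕, swp i j A = B) := by
  unfold SwpFam
  simp only [Finset.mem_union, Finset.mem_filter, Finset.mem_image]
  constructor
  · rintro (⟨h1, h2⟩ | ⟨A, ⟨hA1, hA2⟩, rfl⟩)
    · exact Or.inl ⟨h1, h2⟩
    · by_cases hB : swp i j A ∈ 𝓕
      · exact absurd hB hA2
      · exact Or.inr ⟨hB, A, hA1, rfl⟩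
  · rintro (⟨h1, h2⟩ | ⟨h1, A, hA1, rfl⟩)
    · exact Or.inl ⟨h1, h2⟩
    · right
      refine ⟨A, ⟨hA1, ?_⟩, rfl⟩
      intro hc; exact h1 hc

lemma Cmp_card (hij : i ≠ j) : (SwpFam i j 𝓕).card = 𝓕.card := by
  unfold SwpFam
  rw [Finset.card_union_of_disjoint, Finset.card_image_of_injOn]
  · rw [← Finset.card_union_of_disjoint (Finset.disjoint_filter_filter_not 𝓕 𝓕 _),
      Finset.filter_union_filter_not_eq]
  · intro A hA B hB hEq
    simp only [Finset.coe_filter, Set.mem_setOf_eq] at hA hB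
    have hA' : j ∈ A ∧ i ∉ A := by
      by_contra h; rw [cmp_of_neg h] at hA; exact hA.2 hA.1
    have hB' : j ∈ B ∧ i ∉ B := by
      by_contra h; rw [cmp_of_neg h] at hB; exact hB.2 hB.1
    exact cmp_injOn hij hA' hB' hEq
  · rw [Finset.disjoint_right]
    rintro B hB
    simp only [Finset.mem_image, Finset.mem_filter] at hB
    obtain ⟨A, ⟨_, hA2⟩, rfl⟩ := hB
    simp only [Finset.mem_filter]
    rintro ⟨h1, _⟩; exact hA2 h1

/-- sum of all elements of all members -/
def fam_wt (𝓕 : Finset (Finset ℕ)) : ℕ := ∑ A ∈ 𝓕, ∑ x ∈ A, x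

lemma cmp_wt_lt {A : Finset ℕ} (hij : i < j) (h1 : j ∈ A) (h2 : i ∉ A) :
    ∑ x ∈ swp i j A, x < ∑ x ∈ A, x := by
  rw [cmp_of_pos h1 h2, Finset.sum_insert (fun hi => h2 (Finset.mem_of_mem_erase hi))]
  have hj := Finset.add_sum_erase A id h1
  simp only [id] at hj
  omega

lemma Cmp_wt_lt (hij : i < j) (hne : ∃ A ∈ 𝓕, j ∈ A ∧ i ∉ A ∧ swp i j A ∉ 𝓕) :
    fam_wt (SwpFam i j 𝓕) < fam_wt 𝓕 := by
  obtain ⟨A0, hA0, hj0, hi0, hc0⟩ := hne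
  unfold SwpFam fam_wt
  rw [Finset.sum_union, Finset.sum_image]
  · have key : ∑ A ∈ 𝓕.filter (fun A => swp i j A ∉ 𝓕), ∑ x ∈ swp i j A, x
        < ∑ A ∈ 𝓕.filter (fun A => swp i j A ∉ 𝓕), ∑ x ∈ A, x := by
      apply Finset.sum_lt_sum
      · intro B hB
        rw [Finset.mem_filter] at hB
        by_cases h : j ∈ B ∧ i ∉ B
        · exact le_of_lt (cmp_wt_lt hij h.1 h.2)
        · rw [cmp_of_neg h]
      · exact ⟨A0, Finset.mem_filter.2 ⟨hA0, hc0⟩, cmp_wt_lt hij hj0 hi0⟩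
    calc ∑ A ∈ 𝓕.filter (fun A => swp i j A ∈ 𝓕), ∑ x ∈ A, x
          + ∑ A ∈ 𝓕.filter (fun A => swp i j A ∉ 𝓕), ∑ x ∈ swp i j A, x
        < ∑ A ∈ 𝓕.filter (fun A => swp i j A ∈ 𝓕), ∑ x ∈ A, x
          + ∑ A ∈ 𝓕.filter (fun A => swp i j A ∉ 𝓕), ∑ x ∈ A, x := by omega
      _ = fam_wt 𝓕 := by
          rw [← Finset.sum_union (Finset.disjoint_filter_filter_not 𝓕 𝓕 _),
            Finset.filter_union_filter_not_eq]
          rfl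
  · -- injOn for sum_image
    intro A hA B hB hEq
    simp only [Finset.mem_coe, Finset.mem_filter] at hA hB
    have hA' : j ∈ A ∧ i ∉ A := by
      by_contra h; rw [cmp_of_neg h] at hA; exact hA.2 hA.1
    have hB' : j ∈ B ∧ i ∉ B := by
      by_contra h; rw [cmp_of_neg h] at hB; exact hB.2 hB.1
    exact cmp_injOn hij.ne hA' hB' hEq
  · rw [Finset.disjoint_right]
    rintro B hB
    simp only [Finset.mem_image, Finset.mem_filter] at hB
    obtain ⟨A, ⟨_, hA2⟩, rfl⟩ := hB
    simp only [Finset.mem_filter]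
    rintro ⟨h1, _⟩; exact hA2 h1





lemma Cmp_rwise {i j r t : ℕ} {𝓕 : Finset (Finset ℕ)} (hij : i ≠ j)
    (hint : RwiseIntersecting r t 𝓕) : RwiseIntersecting r t (SwpFam i j 𝓕) := by
  intro G hG
  by_cases hall𝓕 : ∀ a, G a ∈ 𝓕
  · exact hint G hall𝓕
  push_neg at hall𝓕
  obtain ⟨b, hb⟩ := hall𝓕
  -- choose preimages
  have hFF : ∀ a, ∃ A, A ∈ 𝓕 ∧ ((G a ∈ 𝓕 ∧ A = G a) ∨
      (G a ∉ 𝓕 ∧ j ∈ A ∧ i ∉ A ∧ G a = insert i (A.erase j))) := by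
    intro a
    rcases mem_Cmp.1 (hG a) with ⟨h1, _⟩ | ⟨h1, A, hA, hswp⟩
    · exact ⟨G a, h1, Or.inl ⟨h1, rfl⟩⟩
    · refine ⟨A, hA, Or.inr ⟨h1, ?_⟩⟩
      have hAc : j ∈ A ∧ i ∉ A := by
        by_contra h
        rw [cmp_of_neg h] at hswp
        exact h1 (hswp ▸ hA)
      rw [cmp_of_pos hAc.1 hAc.2] at hswp
      exact ⟨hAc.1, hAc.2, hswp.symm⟩
  choose FF hFF1 hFF2 using hFF
  have hFb : G b ∉ 𝓕 → j ∈ FF b ∧ i ∉ FF b ∧ G b = insert i ((FF b).erase j) := by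
    intro h
    rcases hFF2 b with ⟨h1, _⟩ | h1
    · exact absurd h1 h
    · exact h1.2
  obtain ⟨hjFb, hiFb, hGb⟩ := hFb hb
  have hifin : ∀ (H : Fin r → Finset ℕ), (⋂ a, ((H a : Finset ℕ) : Set ℕ)).Finite :=
    fun H => Set.Finite.subset (H b).finite_toSet (Set.iInter_subset _ b)
  by_cases h2a : ∃ b0, G b0 ∈ 𝓕 ∧ j ∈ G b0 ∧ i ∉ G b0
  · obtain ⟨b0, hb0F, hjb0, hib0⟩ := h2a
    have hswpb0 : insert i ((G b0).erase j) ∈ 𝓕 := by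
      rcases mem_Cmp.1 (hG b0) with ⟨_, h1⟩ | ⟨h1, _⟩
      · rwa [cmp_of_pos hjb0 hib0] at h1
      · exact absurd hb0F h1
    set H : Fin r → Finset ℕ := fun a =>
      if G a ∈ 𝓕 then (if a = b0 then insert i ((G b0).erase j) else G a) else FF a with hH
    have hHmem : ∀ a, H a ∈ 𝓕 := by
      intro a
      simp only [hH]
      split_ifs with h1 h2
      · exact hswpb0
      · exact h1
      · exact hFF1 a
    have hsub : (⋂ a, ((H a : Finset ℕ) : Set ℕ)) ⊆ ⋂ a, ((G a : Finset ℕ) : Set ℕ) := by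
      intro z hz
      simp only [Set.mem_iInter] at hz ⊢
      have hzj : z ≠ j := by
        have := hz b0
        simp only [hH, hb0F, if_pos, if_pos rfl] at this
        intro h; subst h
        simp only [Finset.coe_insert, Set.mem_insert_iff, Finset.coe_erase, Set.mem_diff] at this
        rcases this with h | h
        · exact hij h.symm
        · simp at h
      have hzi : z ≠ i := by
        have h' := hz b
        rw [hH] at h'
        simp only [if_neg hb] at h'
        intro h; subst h
        exact hiFb (by exact_mod_cast h')
      intro a
      have hza := hz a
      simp only [hH] at hza
      split_ifs at hza with h1 h2
      · subst h2
        simp only [Finset.coe_insert, Set.mem_insert_iff, Finset.coe_erase, Set.mem_diff] at hza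
        rcases hza with h | h
        · exact absurd h hzi
        · exact h.1
      · exact hza
      · rcases hFF2 a with ⟨hh, _⟩ | ⟨_, hjA, hiA, hGa⟩
        · exact absurd hh h1
        · rw [hGa]
          simp only [Finset.coe_insert, Set.mem_insert_iff, Finset.coe_erase, Set.mem_diff]
          exact Or.inr ⟨by exact_mod_cast hza, by simpa using hzj⟩
    exact le_trans (hint H hHmem) (Set.ncard_le_ncard hsub (hifin G))
  · push_neg at h2a
    set H : Fin r → Finset ℕ := fun a => if G a ∈ 𝓕 then G a else FF a with hH
    have hHmem : ∀ a, H a ∈ 𝓕 := by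
      intro a; simp only [hH]; split_ifs with h1
      · exact h1
      · exact hFF1 a
    have ht' := hint H hHmem
    have hHb : H b = FF b := by simp only [hH, if_neg hb]
    have hzi : (i : ℕ) ∉ (⋂ a, ((H a : Finset ℕ) : Set ℕ)) := by
      intro h
      simp only [Set.mem_iInter] at h
      have := h b
      rw [hHb] at this
      exact hiFb (by exact_mod_cast this)
    have hmemG : ∀ z, z ∈ (⋂ a, ((H a : Finset ℕ) : Set ℕ)) → z ≠ j →
        z ∈ ⋂ a, ((G a : Finset ℕ) : Set ℕ) := by
      intro z hz hzj
      have hzi' : z ≠ i := fun h => hzi (h ▸ hz)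
      simp only [Set.mem_iInter] at hz ⊢
      intro a
      have hza := hz a
      simp only [hH] at hza
      split_ifs at hza with h1
      · exact hza
      · rcases hFF2 a with ⟨hh, _⟩ | ⟨_, hjA, hiA, hGa⟩
        · exact absurd hh h1
        · rw [hGa]
          simp only [Finset.coe_insert, Set.mem_insert_iff, Finset.coe_erase, Set.mem_diff]
          exact Or.inr ⟨by exact_mod_cast hza, by simpa using hzj⟩
    by_cases hjH : (j : ℕ) ∈ ⋂ a, ((H a : Finset ℕ) : Set ℕ)
    · -- insert i (⋂H \ {j}) ⊆ ⋂G
      have hiG : (i : ℕ) ∈ ⋂ a, ((G a : Finset ℕ) : Set ℕ) := by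
        simp only [Set.mem_iInter] at hjH ⊢
        intro a
        by_cases h1 : G a ∈ 𝓕
        · have hja : j ∈ G a := by
            have := hjH a
            simp only [hH, if_pos h1] at this
            exact_mod_cast this
          exact_mod_cast h2a a h1 hja
        · rcases hFF2 a with ⟨hh, _⟩ | ⟨_, hjA, hiA, hGa⟩
          · exact absurd hh h1
          · rw [hGa]; simp
      have hsub : insert i ((⋂ a, ((H a : Finset ℕ) : Set ℕ)) \ {j})
          ⊆ ⋂ a, ((G a : Finset ℕ) : Set ℕ) := by
        rintro z (rfl | ⟨hz1, hz2⟩)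
        · exact hiG
        · exact hmemG z hz1 (by simpa using hz2)
      have h1 : ((⋂ a, ((H a : Finset ℕ) : Set ℕ)) \ {j}).ncard + 1
          = (⋂ a, ((H a : Finset ℕ) : Set ℕ)).ncard :=
        Set.ncard_diff_singleton_add_one hjH (hifin H)
      have h2 : (insert i ((⋂ a, ((H a : Finset ℕ) : Set ℕ)) \ {j})).ncard
          = ((⋂ a, ((H a : Finset ℕ) : Set ℕ)) \ {j}).ncard + 1 :=
        Set.ncard_insert_of_notMem (fun h => hzi h.1) ((hifin H).diff)
      have h3 := Set.ncard_le_ncard hsub (hifin G)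
      omega
    · have hsub : (⋂ a, ((H a : Finset ℕ) : Set ℕ)) ⊆ ⋂ a, ((G a : Finset ℕ) : Set ℕ) := by
        intro z hz
        exact hmemG z hz (fun h => hjH (h ▸ hz))
      exact le_trans ht' (Set.ncard_le_ncard hsub (hifin G))



lemma swap_closure {𝓕 : Finset (Finset ℕ)} (hshift : Shifted 𝓕) (S : Finset ℕ) :
    ∀ (F : Finset ℕ) (a b : ℕ → ℕ), F ∈ 𝓕 →
    (∀ s ∈ S, a s ∈ F) → Set.InjOn a S →
    (∀ s ∈ S, b s ∉ F) → Set.InjOn b S →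
    (∀ s ∈ S, 1 ≤ b s ∧ b s < a s) →
    (F \ S.image a) ∪ S.image b ∈ 𝓕 := by
  induction S using Finset.induction_on with
  | empty => intro F a b hF _ _ _ _ _; simpa using hF
  | @insert s₀ S' hs₀ ih =>
    intro F a b hF ha hainj hb hbinj hbd
    have hs₀S : s₀ ∈ insert s₀ S' := Finset.mem_insert_self _ _
    have hbd₀ := hbd s₀ hs₀S
    have ha₀ := ha s₀ hs₀S
    have hb₀ := hb s₀ hs₀S
    set F₁ : Finset ℕ := insert (b s₀) (F.erase (a s₀)) with hF₁
    have hF₁mem : F₁ ∈ 𝓕 := hshift (b s₀) (a s₀) F hbd₀.1 hbd₀.2 hF ha₀ hb₀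
    have key := ih F₁ a b hF₁mem ?_ (hainj.mono (by simp [Finset.subset_insert, Finset.coe_subset])) ?_
      (hbinj.mono (by simp [Finset.subset_insert, Finset.coe_subset])) ?_
    · have heq : (F₁ \ S'.image a) ∪ S'.image b
          = (F \ (insert s₀ S').image a) ∪ (insert s₀ S').image b := by
        rw [Finset.image_insert, Finset.image_insert]
        ext z
        simp only [Finset.mem_union, Finset.mem_sdiff, Finset.mem_insert, Finset.mem_erase, hF₁]
        constructor
        · rintro (⟨rfl | ⟨hz1, hz2⟩, hz3⟩ | hz)
          · exact Or.inr (Or.inl rfl)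
          · exact Or.inl ⟨hz2, by tauto⟩
          · exact Or.inr (Or.inr hz)
        · rintro (⟨hz1, hz2⟩ | rfl | hz)
          · push_neg at hz2
            refine Or.inl ⟨Or.inr ⟨hz2.1, hz1⟩, hz2.2⟩
          · refine Or.inl ⟨Or.inl rfl, ?_⟩
            intro hmem
            obtain ⟨s, hs, heq⟩ := Finset.mem_image.1 hmem
            exact hb₀ (heq ▸ ha s (Finset.mem_insert_of_mem hs))
          · exact Or.inr hz
      rwa [heq] at key
    · -- a s ∈ F₁ for s ∈ S'
      intro s hs
      have hsS : s ∈ insert s₀ S' := Finset.mem_insert_of_mem hs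
      have : a s ≠ a s₀ := by
        intro h
        exact hs₀ (by rwa [hainj hsS hs₀S h] at hs)
        -- careful: hainj : InjOn a ↑(insert s₀ S')
      rw [hF₁]
      exact Finset.mem_insert_of_mem (Finset.mem_erase.2 ⟨this, ha s hsS⟩)
    · intro s hs
      have hsS : s ∈ insert s₀ S' := Finset.mem_insert_of_mem hs
      have hne : b s ≠ b s₀ := by
        intro h
        exact hs₀ (by rwa [hbinj hsS hs₀S h] at hs)
      rw [hF₁]
      simp only [Finset.mem_insert, Finset.mem_erase]
      rintro (h | h)
      · exact hne h
      · exact hb s hsS h.2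
    · intro s hs
      exact hbd s (Finset.mem_insert_of_mem hs)


open Finset



lemma shifted_key {n k r t : ℕ} {𝓕 : Finset (Finset ℕ)} (hr : 2 ≤ r) (ht : 1 ≤ t)
    (hn : 2 * k ≤ n + t) (h𝓕 : 𝓕 ⊆ Finset.powersetCard k (Finset.Icc 1 n))
    (hint : RwiseIntersecting r t 𝓕) (hsh : Shifted 𝓕) {F : Finset ℕ} (hF : F ∈ 𝓕) :
    ∃ d, t + (r - 1) * d ≤ (F ∩ Finset.Icc 1 (t + r * d)).card := by
  by_contra hviol
  push_neg at hviol
  obtain ⟨hFsub, hk⟩ := Finset.mem_powersetCard.1 (h𝓕 hF)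
  have hpos : ∀ x ∈ F, 1 ≤ x := fun x hx => (Finset.mem_Icc.1 (hFsub hx)).1
  have htk : t ≤ k := by
    have := hint (fun _ => F) (fun _ => hF)
    have hne : Nonempty (Fin r) := ⟨⟨0, by omega⟩⟩
    have h2 : (⋂ _ : Fin r, ((F : Finset ℕ) : Set ℕ)) = (F : Set ℕ) := by
      exact Set.iInter_eq_const (fun _ => rfl)
    rw [h2, Set.ncard_coe_finset, hk] at this
    exact this
  set C : Finset ℕ := Finset.Icc 1 n \ F with hC
  have hc : C.card = n - k := by
    rw [hC, Finset.card_sdiff_of_subset hFsub, Nat.card_Icc, hk]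
    omega
  set xE := F.orderEmbOfFin hk with hxE
  set yE := C.orderEmbOfFin hc with hyE
  -- Claim A
  have claimA : ∀ q : ℕ, t + (r - 1) * q ≤ k →
      (t + r * q ≤ n ∧ q + 1 ≤ (C ∩ Finset.Icc 1 (t + r * q)).card) := by
    intro q hq
    have hmul : r * q ≤ 2 * ((r - 1) * q) := by
      rw [two_mul, ← add_mul]
      exact Nat.mul_le_mul_right q (by omega)
    have h1 : t + r * q ≤ n := by omega
    refine ⟨h1, ?_⟩
    have hIsub : Finset.Icc 1 (t + r * q) ⊆ Finset.Icc 1 n :=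
      Finset.Icc_subset_Icc_right h1
    have hCI : C ∩ Finset.Icc 1 (t + r * q) = Finset.Icc 1 (t + r * q) \ F := by
      rw [hC]
      ext z
      simp only [Finset.mem_inter, Finset.mem_sdiff, Finset.mem_Icc]
      constructor
      · rintro ⟨⟨h2, h3⟩, h4⟩; exact ⟨h4, h3⟩
      · rintro ⟨⟨h2, h3⟩, h4⟩; exact ⟨⟨⟨h2, le_trans h3 h1⟩, h4⟩, h2, h3⟩
    have hsplit := Finset.card_inter_add_card_sdiff (Finset.Icc 1 (t + r * q)) F
    have hFI := hviol q
    have hIcard : (Finset.Icc 1 (t + r * q)).card = t + r * q := by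
      rw [Nat.card_Icc]; omega
    have hcomm : (Finset.Icc 1 (t + r * q) ∩ F).card = (F ∩ Finset.Icc 1 (t + r * q)).card := by
      rw [Finset.inter_comm]
    have hrq1 : (r - 1) * q + q = r * q := by
      rcases r with _ | r'
      · omega
      · simp only [Nat.succ_sub_one]; ring
    rw [hCI]
    omega
  -- y index valid
  have hqvalid : ∀ q : ℕ, t + (r - 1) * q ≤ k → q < n - k := by
    intro q hq
    have h2 := (claimA q hq).2
    have h3 : (C ∩ Finset.Icc 1 (t + r * q)).card ≤ C.card := Finset.card_le_card inter_subset_left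
    omega
  -- total functions
  set a : ℕ → ℕ := fun s => if h : s < k then xE ⟨s, h⟩ else 0 with ha
  set bf : ℕ → ℕ := fun s => if h : (s - (t - 1)) / (r - 1) < n - k
      then yE ⟨(s - (t - 1)) / (r - 1), h⟩ else 0 with hbf
  set Sm : ℕ → Finset ℕ := fun m =>
    (Finset.range k).filter (fun s => t - 1 ≤ s ∧ (s - (t - 1)) % (r - 1) = m - 1) with hSm
  -- facts about members of Sm
  have hSmem : ∀ m, 1 ≤ m → m ≤ r - 1 → ∀ s ∈ Sm m,
      s < k ∧ t - 1 ≤ s ∧ s - (t-1) = (r-1) * ((s - (t-1)) / (r-1)) + (m - 1) := by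
    intro m hm1 hm2 s hs
    rw [hSm, Finset.mem_filter, Finset.mem_range] at hs
    obtain ⟨h1, h2, h3⟩ := hs
    refine ⟨h1, h2, ?_⟩
    conv_lhs => rw [← Nat.div_add_mod (s - (t-1)) (r-1)]
    rw [h3]
  have hqk : ∀ m, 1 ≤ m → m ≤ r - 1 → ∀ s ∈ Sm m,
      t + (r - 1) * ((s - (t - 1)) / (r - 1)) ≤ k := by
    intro m hm1 hm2 s hs
    obtain ⟨h1, h2, h3⟩ := hSmem m hm1 hm2 s hs
    omega
  -- b s properties
  have hbprop : ∀ m, 1 ≤ m → m ≤ r - 1 → ∀ s ∈ Sm m,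
      bf s ∈ C ∧ bf s ≤ t + r * ((s - (t - 1)) / (r - 1)) := by
    intro m hm1 hm2 s hs
    have hq := hqk m hm1 hm2 s hs
    have hv := hqvalid _ hq
    rw [hbf]
    simp only [dif_pos hv]
    exact ⟨Finset.orderEmbOfFin_mem C hc _, enum_le_of_card_inter hc _ (claimA _ hq).2⟩
  have hCnotF : ∀ z ∈ C, z ∉ F := by
    intro z hz
    rw [hC, Finset.mem_sdiff] at hz
    exact hz.2
  have hCpos : ∀ z ∈ C, 1 ≤ z := by
    intro z hz
    rw [hC, Finset.mem_sdiff, Finset.mem_Icc] at hz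
    exact hz.1.1
  -- the swap hypotheses, giving G m ∈ 𝓕
  have hGmem : ∀ m, 1 ≤ m → m ≤ r - 1 → (F \ (Sm m).image a) ∪ (Sm m).image bf ∈ 𝓕 := by
    intro m hm1 hm2
    apply swap_closure hsh (Sm m) F a bf hF
    · intro s hs
      obtain ⟨h1, _, _⟩ := hSmem m hm1 hm2 s hs
      rw [ha]
      simp only [dif_pos h1]
      exact Finset.orderEmbOfFin_mem F hk _
    · intro s hs s' hs' heq
      obtain ⟨h1, _, _⟩ := hSmem m hm1 hm2 s (by exact_mod_cast hs)
      obtain ⟨h1', _, _⟩ := hSmem m hm1 hm2 s' (by exact_mod_cast hs')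
      rw [ha] at heq
      simp only [dif_pos h1, dif_pos h1'] at heq
      have := (F.orderEmbOfFin hk).injective heq
      exact_mod_cast congrArg Fin.val this
    · intro s hs
      exact hCnotF _ (hbprop m hm1 hm2 s hs).1
    · intro s hs s' hs' heq
      obtain ⟨h1, h2, h3⟩ := hSmem m hm1 hm2 s (by exact_mod_cast hs)
      obtain ⟨h1', h2', h3'⟩ := hSmem m hm1 hm2 s' (by exact_mod_cast hs')
      have hv := hqvalid _ (hqk m hm1 hm2 s (by exact_mod_cast hs))
      have hv' := hqvalid _ (hqk m hm1 hm2 s' (by exact_mod_cast hs'))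
      rw [hbf] at heq
      simp only [dif_pos hv, dif_pos hv'] at heq
      have := (C.orderEmbOfFin hc).injective heq
      have hqq : (s - (t-1)) / (r-1) = (s' - (t-1)) / (r-1) := by
        exact_mod_cast congrArg Fin.val this
      rw [hqq] at h3
      omega
    · intro s hs
      obtain ⟨h1, h2, h3⟩ := hSmem m hm1 hm2 s hs
      have hq := hqk m hm1 hm2 s hs
      obtain ⟨hbC, hble⟩ := hbprop m hm1 hm2 s hs
      refine ⟨hCpos _ hbC, ?_⟩
      -- b s ≤ t + r q < xE (t-1+(r-1)q) ≤ xE s = a s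
      set q := (s - (t-1)) / (r-1) with hqdef
      have hsk : (t - 1) + (r - 1) * q < k := by omega
      have hxlt : t + r * q < xE ⟨(t-1) + (r-1)*q, hsk⟩ := by
        apply lt_enum_of_card_inter hk _ hpos
        have := hviol q
        simp only []
        omega
      have hmono : xE ⟨(t-1) + (r-1)*q, hsk⟩ ≤ xE ⟨s, h1⟩ := by
        apply (F.orderEmbOfFin hk).monotone
        simp only [Fin.mk_le_mk]
        omega
      rw [ha]
      simp only [dif_pos h1]
      omega
  -- build the tuple
  have hrpos : 0 < r := by omega
  set T : Fin r → Finset ℕ := fun v =>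
    if v.val = 0 then F else (F \ (Sm v.val).image a) ∪ (Sm v.val).image bf with hT
  have hTmem : ∀ v, T v ∈ 𝓕 := by
    intro v
    rw [hT]
    by_cases h : v.val = 0
    · simp only [if_pos h]; exact hF
    · simp only [if_neg h]
      exact hGmem v.val (by omega) (by have := v.isLt; omega)
  have hint' := hint T hTmem
  -- intersection is small
  have hsub : (⋂ v, ((T v : Finset ℕ) : Set ℕ)) ⊆ ((Finset.range (t-1)).image a : Finset ℕ) := by
    intro z hz
    simp only [Set.mem_iInter] at hz
    have hzF : z ∈ F := by
      have := hz ⟨0, hrpos⟩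
      rw [hT] at this
      simpa using this
    obtain ⟨s, hsF⟩ : ∃ s : Fin k, xE s = z := by
      have hrange := Finset.range_orderEmbOfFin F hk
      have : z ∈ Set.range (F.orderEmbOfFin hk) := hrange ▸ hzF
      exact this
    by_cases hst : (s : ℕ) < t - 1
    · simp only [Finset.coe_image, Set.mem_image]
      refine ⟨s, by simpa using hst, ?_⟩
      rw [ha]
      simp only [dif_pos s.isLt]
      exact hsF
    · exfalso
      push_neg at hst
      set m : ℕ := ((s : ℕ) - (t-1)) % (r-1) + 1 with hm
      have hrm1 : 0 < r - 1 := by omega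
      have hmlt : m - 1 < r - 1 := by
        rw [hm]
        simpa using Nat.mod_lt _ hrm1
      have hmem : (s : ℕ) ∈ Sm m := by
        rw [hSm, Finset.mem_filter, Finset.mem_range]
        exact ⟨s.isLt, hst, by rw [hm]; simp⟩
      have hv : (⟨m, by omega⟩ : Fin r).val = m := rfl
      have hzT := hz ⟨m, by omega⟩
      rw [hT] at hzT
      have hm0 : m ≠ 0 := by omega
      simp only [hv, if_neg hm0] at hzT
      rw [Finset.coe_union, Set.mem_union] at hzT
      rcases hzT with hz1 | hz2
      · rw [Finset.coe_sdiff, Set.mem_diff] at hz1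
        apply hz1.2
        rw [Finset.coe_image, Set.mem_image]
        refine ⟨(s : ℕ), by exact_mod_cast hmem, ?_⟩
        rw [ha]; simp only [dif_pos s.isLt]
        exact hsF
      · rw [Finset.coe_image, Set.mem_image] at hz2
        obtain ⟨s', hs', heq⟩ := hz2
        have : bf s' ∈ C := (hbprop m (by omega) (by omega) s' (by exact_mod_cast hs')).1
        exact hCnotF _ this (heq ▸ hzF)
  have hcard : (⋂ v, ((T v : Finset ℕ) : Set ℕ)).ncard ≤ t - 1 := by
    have h1 := Set.ncard_le_ncard hsub ((Finset.range (t-1)).image a).finite_toSet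
    rw [Set.ncard_coe_finset] at h1
    have h2 : ((Finset.range (t-1)).image a).card ≤ t - 1 := by
      apply le_trans (Finset.card_image_le)
      simp
    omega
  omega


open Finset

/-- walk condition -/
def rcond (r d : ℕ) (B : Finset ℕ) : Prop :=
  ∃ j ∈ Finset.range (B.card + 1), (r - 1) * j + d ≤ (B ∩ Finset.Icc 1 (r * j)).card

instance (r d : ℕ) : DecidablePred (rcond r d) := fun _ => by
  unfold rcond; infer_instance

lemma rsub_mul {r : ℕ} (hr : 1 ≤ r) (q : ℕ) : (r - 1) * q + q = r * q := by
  rcases r with _ | r'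
  · omega
  · simp only [Nat.succ_sub_one]; ring

lemma rcond_le {r d : ℕ} (hr : 2 ≤ r) {B : Finset ℕ} (h : rcond r d B) : r * d ≤ B.card := by
  obtain ⟨j, _, hle⟩ := h
  have h1 : (B ∩ Finset.Icc 1 (r * j)).card ≤ r * j :=
    le_trans (Finset.card_le_card inter_subset_right) (by rw [Nat.card_Icc]; omega)
  have h2 : (B ∩ Finset.Icc 1 (r * j)).card ≤ B.card := Finset.card_le_card inter_subset_left
  have h3 := rsub_mul (by omega : 1 ≤ r) j
  have hdj : d ≤ j := by omega
  have h4 : (r - 1) * d ≤ (r - 1) * j := Nat.mul_le_mul_left _ hdj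
  have h5 := rsub_mul (by omega : 1 ≤ r) d
  omega

lemma choose_mono_of_le_half {M : ℕ} : ∀ {x y : ℕ}, x ≤ y → 2 * y ≤ M →
    Nat.choose M x ≤ Nat.choose M y := by
  intro x y
  induction y with
  | zero => intro h _; interval_cases x; rfl
  | succ y' ihy =>
    intro hxy hy
    rcases Nat.eq_or_lt_of_le hxy with rfl | h
    · rfl
    · exact le_trans (ihy (by omega) (by omega))
        (Nat.choose_le_succ_of_lt_half_left (by omega))

lemma counting_lemma {r : ℕ} (hr : 2 ≤ r) :
    ∀ m b d : ℕ, r * d ≤ b → 2 * b ≤ m + r * d →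
    ((Finset.powersetCard b (Finset.Icc 1 m)).filter (rcond r d)).card
      ≤ Nat.choose m (b - r * d) := by
  intro m
  induction m using Nat.strong_induction_on with
  | _ m ih =>
  intro b d h1 h2
  rcases Nat.eq_zero_or_pos d with rfl | hd
  · simp only [Nat.mul_zero, Nat.sub_zero]
    calc ((Finset.powersetCard b (Finset.Icc 1 m)).filter (rcond r 0)).card
        ≤ (Finset.powersetCard b (Finset.Icc 1 m)).card := Finset.card_filter_le _ _
      _ = Nat.choose m b := by rw [Finset.card_powersetCard, Nat.card_Icc]; norm_num
  have hrd : r ≤ r * d := Nat.le_mul_of_pos_right r hd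
  by_cases hmr : m < r
  · -- empty
    have : (Finset.powersetCard b (Finset.Icc 1 m)).filter (rcond r d) = ∅ := by
      rw [Finset.filter_eq_empty_iff]
      intro B hB hc
      obtain ⟨hBsub, hBcard⟩ := Finset.mem_powersetCard.1 hB
      have hbm : b ≤ m := by
        have := Finset.card_le_card hBsub
        rw [hBcard, Nat.card_Icc] at this
        omega
      have := rcond_le hr hc
      omega
    rw [this]
    simp
  push_neg at hmr
  set c := b - r * d with hc
  -- partition by B ∩ Icc 1 r
  have hfib : ∀ B ∈ (Finset.powersetCard b (Finset.Icc 1 m)).filter (rcond r d),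
      B ∩ Finset.Icc 1 r ∈ (Finset.Icc 1 r).powerset :=
    fun B _ => Finset.mem_powerset.2 inter_subset_right
  rw [Finset.card_eq_sum_card_fiberwise hfib]
  -- fiber bound
  set gterm : ℕ → ℕ := fun σ =>
    if r - σ ≤ c then Nat.choose (m - r) (c - (r - σ)) else 0 with hgterm
  have hfiber : ∀ B₁ ∈ (Finset.Icc 1 r).powerset,
      (((Finset.powersetCard b (Finset.Icc 1 m)).filter (rcond r d)).filter
        (fun B => B ∩ Finset.Icc 1 r = B₁)).card ≤ gterm B₁.card := by
    intro B₁ hB₁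
    set σ := B₁.card with hσ
    have hσr : σ ≤ r := by
      have := Finset.card_le_card (Finset.mem_powerset.1 hB₁)
      rw [Nat.card_Icc] at this
      omega
    set dd := d + r - 1 - σ with hdd
    -- the injection into the smaller problem
    have hinj : (((Finset.powersetCard b (Finset.Icc 1 m)).filter (rcond r d)).filter
          (fun B => B ∩ Finset.Icc 1 r = B₁)).card
        ≤ ((Finset.powersetCard (b - σ) (Finset.Icc 1 (m - r))).filter (rcond r dd)).card := by
      apply Finset.card_le_card_of_injOn (fun B => (B \ Finset.Icc 1 r).image (fun x => x - r))
      · -- maps to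
        intro B hB
        simp only [Finset.mem_coe, Finset.mem_filter, Finset.mem_powersetCard] at hB
        obtain ⟨⟨⟨hBsub, hBcard⟩, hBcond⟩, hBfib⟩ := hB
        have hbig : ∀ x ∈ B \ Finset.Icc 1 r, r < x ∧ x ≤ m := by
          intro x hx
          rw [Finset.mem_sdiff, Finset.mem_Icc] at hx
          have := Finset.mem_Icc.1 (hBsub hx.1)
          omega
        have hinj2 : Set.InjOn (fun x => x - r) ((B \ Finset.Icc 1 r : Finset ℕ) : Set ℕ) := by
          intro x hx y hy hxy
          have h1 := hbig x (by exact_mod_cast hx)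
          have h2 := hbig y (by exact_mod_cast hy)
          simp only at hxy
          omega
        have hcard2 : (B \ Finset.Icc 1 r).card = b - σ := by
          have := Finset.card_inter_add_card_sdiff B (Finset.Icc 1 r)
          rw [hBfib, hBcard] at this
          omega
        simp only [Finset.mem_coe, Finset.mem_filter, Finset.mem_powersetCard]
        refine ⟨⟨?_, ?_⟩, ?_⟩
        · intro z hz
          obtain ⟨x, hx, rfl⟩ := Finset.mem_image.1 hz
          have := hbig x hx
          rw [Finset.mem_Icc]
          omega
        · rw [Finset.card_image_of_injOn hinj2, hcard2]
        · -- rcond transfer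
          obtain ⟨j, hjmem, hle⟩ := hBcond
          rw [Finset.mem_range] at hjmem
          have hj1 : 1 ≤ j := by
            rcases Nat.eq_zero_or_pos j with rfl | h
            · exfalso
              rw [Nat.mul_zero, Nat.mul_zero, show Finset.Icc 1 0 = ∅ by simp,
                Finset.inter_empty, Finset.card_empty] at hle
              omega
            · exact h
          obtain ⟨j', rfl⟩ : ∃ j', j = j' + 1 := ⟨j - 1, by omega⟩
          have hrj : r ≤ r * (j' + 1) := Nat.le_mul_of_pos_right r (by omega)
          -- split the intersection
          have hsplit : B ∩ Finset.Icc 1 (r * (j' + 1))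
              = (B ∩ Finset.Icc 1 r) ∪ ((B \ Finset.Icc 1 r) ∩ Finset.Icc (r+1) (r * (j'+1))) := by
            ext z
            simp only [Finset.mem_inter, Finset.mem_union, Finset.mem_sdiff, Finset.mem_Icc]
            constructor
            · rintro ⟨hzB, hz1, hz2⟩
              by_cases hzr : z ≤ r
              · exact Or.inl ⟨hzB, hz1, hzr⟩
              · exact Or.inr ⟨⟨hzB, fun hc => hzr hc.2⟩, by omega, hz2⟩
            · rintro (⟨hzB, hz1, hz2⟩ | ⟨⟨hzB, _⟩, hz1, hz2⟩)
              · exact ⟨hzB, hz1, by omega⟩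
              · exact ⟨hzB, by omega, hz2⟩
          have hdisj : Disjoint (B ∩ Finset.Icc 1 r)
              ((B \ Finset.Icc 1 r) ∩ Finset.Icc (r+1) (r * (j'+1))) := by
            rw [Finset.disjoint_left]
            intro z hz hz'
            rw [Finset.mem_inter, Finset.mem_Icc] at hz hz'
            omega
          have himg : ((B \ Finset.Icc 1 r).image (fun x => x - r)) ∩ Finset.Icc 1 (r * j')
              = ((B \ Finset.Icc 1 r) ∩ Finset.Icc (r+1) (r * (j'+1))).image (fun x => x - r) := by
            ext z
            simp only [Finset.mem_inter, Finset.mem_image, Finset.mem_sdiff, Finset.mem_Icc]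
            have hmul : r * (j' + 1) = r * j' + r := by ring
            constructor
            · rintro ⟨⟨x, hx, rfl⟩, hz1, hz2⟩
              exact ⟨x, ⟨hx, by omega, by omega⟩, rfl⟩
            · rintro ⟨x, ⟨⟨hx1, hx2⟩, hx3, hx4⟩, rfl⟩
              exact ⟨⟨x, ⟨hx1, hx2⟩, rfl⟩, by omega, by omega⟩
          have hinj3 : Set.InjOn (fun x => x - r)
              (((B \ Finset.Icc 1 r) ∩ Finset.Icc (r+1) (r * (j'+1)) : Finset ℕ) : Set ℕ) := by
            intro x hx y hy hxy
            have hx' : x ∈ (B \ Finset.Icc 1 r) ∩ Finset.Icc (r+1) (r * (j'+1)) := by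
              exact_mod_cast hx
            have hy' : y ∈ (B \ Finset.Icc 1 r) ∩ Finset.Icc (r+1) (r * (j'+1)) := by
              exact_mod_cast hy
            rw [Finset.mem_inter, Finset.mem_Icc] at hx' hy'
            simp only at hxy
            omega
          have hkey : (B ∩ Finset.Icc 1 (r * (j'+1))).card
              = σ + (((B \ Finset.Icc 1 r).image (fun x => x - r)) ∩ Finset.Icc 1 (r * j')).card := by
            rw [hsplit, Finset.card_union_of_disjoint hdisj, hBfib, himg,
              Finset.card_image_of_injOn hinj3]
          -- now establish rcond r dd (f B)
          have hmul1 : (r - 1) * (j' + 1) = (r - 1) * j' + (r - 1) := by ring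
          have hY : (r - 1) * j' + dd ≤ (((B \ Finset.Icc 1 r).image (fun x => x - r))
              ∩ Finset.Icc 1 (r * j')).card := by omega
          refine ⟨j', Finset.mem_range.2 ?_, hY⟩
          have hYle : (((B \ Finset.Icc 1 r).image (fun x => x - r))
              ∩ Finset.Icc 1 (r * j')).card
              ≤ ((B \ Finset.Icc 1 r).image (fun x => x - r)).card :=
            Finset.card_le_card inter_subset_left
          have hj'le : j' ≤ (r - 1) * j' := Nat.le_mul_of_pos_left j' (by omega)
          omega
      · -- injectivity
        intro B hB B' hB' hEq
        simp only [Finset.coe_filter, Set.mem_setOf_eq, Finset.mem_filter,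
          Finset.mem_powersetCard] at hB hB'
        obtain ⟨⟨⟨hBsub, _⟩, _⟩, hBfib⟩ := hB
        obtain ⟨⟨⟨hBsub', _⟩, _⟩, hBfib'⟩ := hB'
        have key : ∀ (A : Finset ℕ), A ⊆ Finset.Icc 1 m → A ∩ Finset.Icc 1 r = B₁ →
            ∀ z, z ∈ A ↔ (z ∈ B₁ ∨ (r < z ∧ z - r ∈ (A \ Finset.Icc 1 r).image (fun x => x - r))) := by
          intro A hAsub hAfib z
          constructor
          · intro hzA
            have hz1 := Finset.mem_Icc.1 (hAsub hzA)
            by_cases hzr : z ≤ r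
            · left
              rw [← hAfib, Finset.mem_inter, Finset.mem_Icc]
              exact ⟨hzA, hz1.1, hzr⟩
            · right
              refine ⟨by omega, Finset.mem_image.2 ⟨z, ?_, rfl⟩⟩
              rw [Finset.mem_sdiff, Finset.mem_Icc]
              exact ⟨hzA, by omega⟩
          · rintro (hzB₁ | ⟨hzr, hzim⟩)
            · rw [← hAfib, Finset.mem_inter] at hzB₁
              exact hzB₁.1
            · obtain ⟨x, hx, hxe⟩ := Finset.mem_image.1 hzim
              rw [Finset.mem_sdiff, Finset.mem_Icc] at hx
              have hx1 := Finset.mem_Icc.1 (hAsub hx.1)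
              have : x = z := by omega
              exact this ▸ hx.1
        have hEq' : (B \ Finset.Icc 1 r).image (fun x => x - r)
            = (B' \ Finset.Icc 1 r).image (fun x => x - r) := hEq
        ext z
        rw [key B hBsub hBfib z, key B' hBsub' hBfib' z, hEq']
    -- now bound the RHS via IH
    rcases Nat.eq_or_lt_of_le hσr with hσeq | hσlt
    · -- σ = r : dd = d - 1
      have hdd' : dd = d - 1 := by omega
      have hre : r * (d - 1) + r = r * d := by
        rcases d with _ | e
        · omega
        · rw [Nat.succ_sub_one, Nat.mul_succ]
      rw [hdd'] at hinj
      refine le_trans hinj (le_trans (ih (m - r) (by omega) (b - σ) (d - 1)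
        (by omega) (by omega)) ?_)
      have hgt : gterm σ = Nat.choose (m - r) c := by
        rw [hgterm]
        have h0 : r - σ = 0 := by omega
        simp only [h0, Nat.zero_le, if_true, Nat.sub_zero]
      rw [hgt]
      have hidx : (b - σ) - r * (d - 1) = c := by omega
      rw [hidx]
    · -- σ < r
      set X := r - 1 - σ with hX
      have hrdd : r * dd = r * d + r * X := by
        rw [hdd, hX]
        have : d + r - 1 - σ = d + X := by omega
        rw [this, Nat.mul_add]
      have hrX : 2 * X ≤ r * X := Nat.mul_le_mul_right X hr
      by_cases hgood : r * dd ≤ b - σ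
      · have hIH := ih (m - r) (by omega) (b - σ) dd hgood (by omega)
        have hrXσ : r ≤ r * X + 2 * σ := by
          rcases Nat.eq_zero_or_pos X with hX0 | hX1
          · omega
          · have : r ≤ r * X := Nat.le_mul_of_pos_right r hX1
            omega
        have hgenuine : r - σ ≤ c := by omega
        have hidx : (b - σ) - r * dd ≤ c - (r - σ) := by omega
        have hhalf : 2 * (c - (r - σ)) ≤ m - r := by omega
        have hmono : Nat.choose (m - r) ((b - σ) - r * dd) ≤ Nat.choose (m - r) (c - (r - σ)) :=
          choose_mono_of_le_half hidx hhalf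
        have hgt : gterm σ = Nat.choose (m - r) (c - (r - σ)) := by
          rw [hgterm]
          simp only [if_pos hgenuine]
        rw [hgt]
        exact le_trans hinj (le_trans hIH hmono)
      · -- bad case : fiber empty
        have : ((Finset.powersetCard (b - σ) (Finset.Icc 1 (m - r))).filter (rcond r dd)) = ∅ := by
          rw [Finset.filter_eq_empty_iff]
          intro B hB hcnd
          obtain ⟨_, hBcard⟩ := Finset.mem_powersetCard.1 hB
          have := rcond_le hr hcnd
          rw [hBcard] at this
          exact hgood this
        rw [this] at hinj
        simp only [Finset.card_empty, Nat.le_zero] at hinj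
        rw [hinj]
        exact Nat.zero_le _
  -- sum the fiber bounds
  calc ∑ B₁ ∈ (Finset.Icc 1 r).powerset,
        (((Finset.powersetCard b (Finset.Icc 1 m)).filter (rcond r d)).filter
          (fun B => B ∩ Finset.Icc 1 r = B₁)).card
      ≤ ∑ B₁ ∈ (Finset.Icc 1 r).powerset, gterm B₁.card := Finset.sum_le_sum hfiber
    _ = ∑ σ ∈ Finset.range (r + 1), Nat.choose r σ * gterm σ := by
        rw [Finset.sum_powerset_apply_card]
        rw [Nat.card_Icc]
        simp only [Nat.add_sub_cancel, smul_eq_mul]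
    _ = ∑ i ∈ Finset.range (r + 1), Nat.choose r (r - i) * gterm (r - i) := by
        rw [← Finset.sum_range_reflect (fun σ => Nat.choose r σ * gterm σ) (r + 1)]
        simp only [Nat.add_sub_cancel]
    _ ≤ Nat.choose m c := by
        have hstep : ∀ i ∈ Finset.range (r + 1),
            Nat.choose r (r - i) * gterm (r - i)
            = if i ≤ c then Nat.choose r i * Nat.choose (m - r) (c - i) else 0 := by
          intro i hi
          rw [Finset.mem_range] at hi
          have hir : i ≤ r := by omega
          rw [Nat.choose_symm hir, hgterm]
          simp only []
          have : r - (r - i) = i := by omega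
          rw [this]
          split_ifs with h
          · rfl
          · exact Nat.mul_zero _
        rw [Finset.sum_congr rfl hstep]
        have hsplit : ∑ i ∈ Finset.range (r + 1),
            (if i ≤ c then Nat.choose r i * Nat.choose (m - r) (c - i) else 0)
            = ∑ i ∈ (Finset.range (r + 1)).filter (· ≤ c),
              Nat.choose r i * Nat.choose (m - r) (c - i) := (Finset.sum_filter _ _).symm
        rw [hsplit]
        have hsub : (Finset.range (r + 1)).filter (· ≤ c) ⊆ Finset.range (c + 1) := by
          intro i hi
          rw [Finset.mem_filter] at hi
          rw [Finset.mem_range]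
          omega
        calc ∑ i ∈ (Finset.range (r + 1)).filter (· ≤ c),
              Nat.choose r i * Nat.choose (m - r) (c - i)
            ≤ ∑ i ∈ Finset.range (c + 1), Nat.choose r i * Nat.choose (m - r) (c - i) :=
              Finset.sum_le_sum_of_subset hsub
          _ = Nat.choose (r + (m - r)) c := by
              rw [Nat.add_choose_eq]
              rw [Finset.Nat.sum_antidiagonal_eq_sum_range_succ_mk]
          _ = Nat.choose m c := by congr 1; omega


open Finset





lemma shifted_bound {n k r t : ℕ} {𝓕 : Finset (Finset ℕ)} (hr : 2 ≤ r) (ht : 1 ≤ t)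
    (hn : 2 * k ≤ n + t) (h𝓕 : 𝓕 ⊆ Finset.powersetCard k (Finset.Icc 1 n))
    (hint : RwiseIntersecting r t 𝓕) (hsh : Shifted 𝓕) :
    𝓕.card ≤ ∑ i ∈ Finset.range (t + 1),
      Nat.choose t i *
        (if t + (r - 1) * i ≤ k then Nat.choose (n - t) (k - t - (r - 1) * i) else 0) := by
  rcases Finset.eq_empty_or_nonempty 𝓕 with rfl | ⟨F0, hF0⟩
  · simp
  obtain ⟨hF0sub, hF0card⟩ := Finset.mem_powersetCard.1 (h𝓕 hF0)
  have htk : t ≤ k := by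
    have h1 := hint (fun _ => F0) (fun _ => hF0)
    have hne : Nonempty (Fin r) := ⟨⟨0, by omega⟩⟩
    have h2 : (⋂ _ : Fin r, ((F0 : Finset ℕ) : Set ℕ)) = (F0 : Set ℕ) :=
      Set.iInter_eq_const (fun _ => rfl)
    rw [h2, Set.ncard_coe_finset, hF0card] at h1
    exact h1
  have hkn : k ≤ n := by
    have := Finset.card_le_card hF0sub
    rw [hF0card, Nat.card_Icc] at this
    omega
  -- partition by F ∩ Icc 1 t
  have hfib : ∀ F ∈ 𝓕, F ∩ Finset.Icc 1 t ∈ (Finset.Icc 1 t).powerset :=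
    fun F _ => Finset.mem_powerset.2 inter_subset_right
  rw [Finset.card_eq_sum_card_fiberwise hfib]
  set gterm : ℕ → ℕ := fun σ =>
    if t + (r - 1) * (t - σ) ≤ k
      then Nat.choose (n - t) (k - t - (r - 1) * (t - σ)) else 0 with hgterm
  have hfiber : ∀ S ∈ (Finset.Icc 1 t).powerset,
      (𝓕.filter (fun F => F ∩ Finset.Icc 1 t = S)).card ≤ gterm S.card := by
    intro S hS
    set σ := S.card with hσ
    have hσt : σ ≤ t := by
      have := Finset.card_le_card (Finset.mem_powerset.1 hS)
      rw [Nat.card_Icc] at this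
      omega
    set i := t - σ with hi
    have hri := rsub_mul (by omega : 1 ≤ r) i
    -- a common fact : for F in the fiber, the key gives d ≥ i and t + (r-1)i ≤ k
    have hdfact : ∀ F ∈ 𝓕, F ∩ Finset.Icc 1 t = S →
        ∃ d, i ≤ d ∧ t + (r - 1) * d ≤ (F ∩ Finset.Icc 1 (t + r * d)).card
          ∧ t + (r - 1) * i ≤ k := by
      intro F hF hFfib
      obtain ⟨hFsub, hFcard⟩ := Finset.mem_powersetCard.1 (h𝓕 hF)
      obtain ⟨d, hd⟩ := shifted_key hr ht hn h𝓕 hint hsh hF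
      have hsubU : F ∩ Finset.Icc 1 (t + r * d)
          ⊆ (F ∩ Finset.Icc 1 t) ∪ Finset.Icc (t + 1) (t + r * d) := by
        intro z hz
        rw [Finset.mem_inter, Finset.mem_Icc] at hz
        rw [Finset.mem_union, Finset.mem_inter, Finset.mem_Icc, Finset.mem_Icc]
        by_cases h : z ≤ t
        · exact Or.inl ⟨hz.1, hz.2.1, h⟩
        · exact Or.inr ⟨by omega, hz.2.2⟩
      have hcard1 : (F ∩ Finset.Icc 1 (t + r * d)).card ≤ σ + r * d := by
        refine le_trans (Finset.card_le_card hsubU) ?_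
        refine le_trans (Finset.card_union_le _ _) ?_
        rw [hFfib, Nat.card_Icc]
        omega
      have hid : i ≤ d := by
        have := rsub_mul (by omega : 1 ≤ r) d
        omega
      have hcard2 : (F ∩ Finset.Icc 1 (t + r * d)).card ≤ k := by
        rw [← hFcard]
        exact Finset.card_le_card inter_subset_left
      have hstep : (r - 1) * i ≤ (r - 1) * d := Nat.mul_le_mul_left _ hid
      exact ⟨d, hid, hd, by omega⟩
    by_cases hguard : t + (r - 1) * i ≤ k
    · -- injection into the counting lemma family
      have hinj : (𝓕.filter (fun F => F ∩ Finset.Icc 1 t = S)).card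
          ≤ ((Finset.powersetCard (k - σ) (Finset.Icc 1 (n - t))).filter (rcond r i)).card := by
        apply Finset.card_le_card_of_injOn (fun F => (F \ Finset.Icc 1 t).image (fun x => x - t))
        · intro F hF
          rw [Finset.mem_coe, Finset.mem_filter] at hF
          obtain ⟨hFmem, hFfib⟩ := hF
          obtain ⟨hFsub, hFcard⟩ := Finset.mem_powersetCard.1 (h𝓕 hFmem)
          have hbig : ∀ x ∈ F \ Finset.Icc 1 t, t < x ∧ x ≤ n := by
            intro x hx
            rw [Finset.mem_sdiff, Finset.mem_Icc] at hx
            have := Finset.mem_Icc.1 (hFsub hx.1)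
            omega
          have hinj2 : Set.InjOn (fun x => x - t) ((F \ Finset.Icc 1 t : Finset ℕ) : Set ℕ) := by
            intro x hx y hy hxy
            have h1 := hbig x (by exact_mod_cast hx)
            have h2 := hbig y (by exact_mod_cast hy)
            simp only at hxy
            omega
          have hcard2 : (F \ Finset.Icc 1 t).card = k - σ := by
            have := Finset.card_inter_add_card_sdiff F (Finset.Icc 1 t)
            rw [hFfib, hFcard] at this
            omega
          rw [Finset.mem_coe, Finset.mem_filter, Finset.mem_powersetCard]
          refine ⟨⟨?_, ?_⟩, ?_⟩
          · intro z hz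
            obtain ⟨x, hx, rfl⟩ := Finset.mem_image.1 hz
            have := hbig x hx
            rw [Finset.mem_Icc]
            omega
          · rw [Finset.card_image_of_injOn hinj2, hcard2]
          · -- rcond r i holds for the image
            obtain ⟨d, hid, hd, _⟩ := hdfact F hFmem hFfib
            have hsplit : F ∩ Finset.Icc 1 (t + r * d)
                = (F ∩ Finset.Icc 1 t) ∪ ((F \ Finset.Icc 1 t) ∩ Finset.Icc (t+1) (t + r * d)) := by
              ext z
              simp only [Finset.mem_inter, Finset.mem_union, Finset.mem_sdiff, Finset.mem_Icc]
              constructor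
              · rintro ⟨hzB, hz1, hz2⟩
                by_cases hzr : z ≤ t
                · exact Or.inl ⟨hzB, hz1, hzr⟩
                · exact Or.inr ⟨⟨hzB, fun hc => hzr hc.2⟩, by omega, hz2⟩
              · rintro (⟨hzB, hz1, hz2⟩ | ⟨⟨hzB, _⟩, hz1, hz2⟩)
                · exact ⟨hzB, hz1, by omega⟩
                · exact ⟨hzB, by omega, hz2⟩
            have hdisj : Disjoint (F ∩ Finset.Icc 1 t)
                ((F \ Finset.Icc 1 t) ∩ Finset.Icc (t+1) (t + r * d)) := by
              rw [Finset.disjoint_left]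
              intro z hz hz'
              rw [Finset.mem_inter, Finset.mem_Icc] at hz hz'
              omega
            have himg : ((F \ Finset.Icc 1 t).image (fun x => x - t)) ∩ Finset.Icc 1 (r * d)
                = ((F \ Finset.Icc 1 t) ∩ Finset.Icc (t+1) (t + r * d)).image (fun x => x - t) := by
              ext z
              simp only [Finset.mem_inter, Finset.mem_image, Finset.mem_sdiff, Finset.mem_Icc]
              constructor
              · rintro ⟨⟨x, hx, rfl⟩, hz1, hz2⟩
                exact ⟨x, ⟨hx, by omega, by omega⟩, rfl⟩
              · rintro ⟨x, ⟨⟨hx1, hx2⟩, hx3, hx4⟩, rfl⟩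
                exact ⟨⟨x, ⟨hx1, hx2⟩, rfl⟩, by omega, by omega⟩
            have hinj3 : Set.InjOn (fun x => x - t)
                (((F \ Finset.Icc 1 t) ∩ Finset.Icc (t+1) (t + r * d) : Finset ℕ) : Set ℕ) := by
              intro x hx y hy hxy
              have hx' : x ∈ (F \ Finset.Icc 1 t) ∩ Finset.Icc (t+1) (t + r * d) := by
                exact_mod_cast hx
              have hy' : y ∈ (F \ Finset.Icc 1 t) ∩ Finset.Icc (t+1) (t + r * d) := by
                exact_mod_cast hy
              rw [Finset.mem_inter, Finset.mem_Icc] at hx' hy'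
              simp only at hxy
              omega
            have hkey : (F ∩ Finset.Icc 1 (t + r * d)).card
                = σ + (((F \ Finset.Icc 1 t).image (fun x => x - t))
                    ∩ Finset.Icc 1 (r * d)).card := by
              rw [hsplit, Finset.card_union_of_disjoint hdisj, hFfib, himg,
                Finset.card_image_of_injOn hinj3]
            have hY : (r - 1) * d + i ≤ (((F \ Finset.Icc 1 t).image (fun x => x - t))
                ∩ Finset.Icc 1 (r * d)).card := by omega
            refine ⟨d, Finset.mem_range.2 ?_, hY⟩
            have hYle : (((F \ Finset.Icc 1 t).image (fun x => x - t))
                ∩ Finset.Icc 1 (r * d)).card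
                ≤ ((F \ Finset.Icc 1 t).image (fun x => x - t)).card :=
              Finset.card_le_card inter_subset_left
            have hdle : d ≤ (r - 1) * d := Nat.le_mul_of_pos_left d (by omega)
            beta_reduce
            omega
        · -- injectivity
          intro F hF F' hF' hEq
          simp only [Finset.coe_filter, Set.mem_setOf_eq] at hF hF'
          obtain ⟨hFmem, hFfib⟩ := hF
          obtain ⟨hFmem', hFfib'⟩ := hF'
          obtain ⟨hFsub, _⟩ := Finset.mem_powersetCard.1 (h𝓕 hFmem)
          obtain ⟨hFsub', _⟩ := Finset.mem_powersetCard.1 (h𝓕 hFmem')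
          have key : ∀ (A : Finset ℕ), A ⊆ Finset.Icc 1 n → A ∩ Finset.Icc 1 t = S →
              ∀ z, z ∈ A ↔ (z ∈ S ∨ (t < z ∧ z - t ∈ (A \ Finset.Icc 1 t).image (fun x => x - t))) := by
            intro A hAsub hAfib z
            constructor
            · intro hzA
              have hz1 := Finset.mem_Icc.1 (hAsub hzA)
              by_cases hzr : z ≤ t
              · left
                rw [← hAfib, Finset.mem_inter, Finset.mem_Icc]
                exact ⟨hzA, hz1.1, hzr⟩
              · right
                refine ⟨by omega, Finset.mem_image.2 ⟨z, ?_, rfl⟩⟩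
                rw [Finset.mem_sdiff, Finset.mem_Icc]
                exact ⟨hzA, by omega⟩
            · rintro (hzS | ⟨hzr, hzim⟩)
              · rw [← hAfib, Finset.mem_inter] at hzS
                exact hzS.1
              · obtain ⟨x, hx, hxe⟩ := Finset.mem_image.1 hzim
                rw [Finset.mem_sdiff, Finset.mem_Icc] at hx
                have hx1 := Finset.mem_Icc.1 (hAsub hx.1)
                have : x = z := by omega
                exact this ▸ hx.1
          have hEq' : (F \ Finset.Icc 1 t).image (fun x => x - t)
              = (F' \ Finset.Icc 1 t).image (fun x => x - t) := hEq
          ext z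
          rw [key F hFsub hFfib z, key F' hFsub' hFfib' z, hEq']
      -- apply counting lemma
      have h2i : 2 * i ≤ r * i := Nat.mul_le_mul_right i hr
      have hCL := counting_lemma hr (n - t) (k - σ) i (by omega) (by omega)
      have hgt : gterm σ = Nat.choose (n - t) (k - t - (r - 1) * i) := by
        rw [hgterm]
        simp only [← hi, if_pos hguard]
      rw [hgt]
      have hidx : (k - σ) - r * i = k - t - (r - 1) * i := by omega
      rw [hidx] at hCL
      exact le_trans hinj hCL
    · -- guard fails : fiber is empty
      have hempty : 𝓕.filter (fun F => F ∩ Finset.Icc 1 t = S) = ∅ := by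
        rw [Finset.filter_eq_empty_iff]
        intro F hF hFfib
        obtain ⟨d, hid, hd, hcontra⟩ := hdfact F hF hFfib
        exact hguard hcontra
      rw [hempty]
      have : gterm σ = 0 := by
        rw [hgterm]
        simp only [← hi, if_neg hguard]
      simp [this]
  -- sum up
  calc ∑ S ∈ (Finset.Icc 1 t).powerset, (𝓕.filter (fun F => F ∩ Finset.Icc 1 t = S)).card
      ≤ ∑ S ∈ (Finset.Icc 1 t).powerset, gterm S.card := Finset.sum_le_sum hfiber
    _ = ∑ σ ∈ Finset.range (t + 1), Nat.choose t σ * gterm σ := by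
        rw [Finset.sum_powerset_apply_card, Nat.card_Icc]
        simp only [Nat.add_sub_cancel, smul_eq_mul]
    _ = ∑ i ∈ Finset.range (t + 1), Nat.choose t (t - i) * gterm (t - i) := by
        rw [← Finset.sum_range_reflect (fun σ => Nat.choose t σ * gterm σ) (t + 1)]
        simp only [Nat.add_sub_cancel]
    _ = ∑ i ∈ Finset.range (t + 1),
          Nat.choose t i *
            (if t + (r - 1) * i ≤ k then Nat.choose (n - t) (k - t - (r - 1) * i) else 0) := by
        apply Finset.sum_congr rfl
        intro i hi
        rw [Finset.mem_range] at hi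
        have hit : i ≤ t := by omega
        rw [Nat.choose_symm hit, hgterm]
        simp only []
        have : t - (t - i) = i := by omega
        rw [this]


lemma Cmp_powersetCard {i j k n : ℕ} (h1i : 1 ≤ i) (hij : i < j) {𝓕 : Finset (Finset ℕ)}
    (h : 𝓕 ⊆ Finset.powersetCard k (Finset.Icc 1 n)) :
    SwpFam i j 𝓕 ⊆ Finset.powersetCard k (Finset.Icc 1 n) := by
  intro B hB
  rcases mem_Cmp.1 hB with ⟨h1, _⟩ | ⟨_, A, hA, rfl⟩
  · exact h h1
  · obtain ⟨hAsub, hAcard⟩ := Finset.mem_powersetCard.1 (h hA)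
    rw [Finset.mem_powersetCard]
    constructor
    · by_cases hcnd : j ∈ A ∧ i ∉ A
      · rw [cmp_of_pos hcnd.1 hcnd.2]
        intro z hz
        rcases Finset.mem_insert.1 hz with rfl | hz'
        · have := Finset.mem_Icc.1 (hAsub hcnd.1)
          rw [Finset.mem_Icc]
          omega
        · exact hAsub (Finset.mem_of_mem_erase hz')
      · rw [cmp_of_neg hcnd]
        exact hAsub
    · rw [cmp_card (by omega : i ≠ j), hAcard]

theorem rwise_intersecting_universal_bound
    (n k r t : ℕ) (hr : 3 ≤ r) (ht : 1 ≤ t) (hn : 2 * k ≤ n + t)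
    (𝓕 : Finset (Finset ℕ))
    (h𝓕 : 𝓕 ⊆ Finset.powersetCard k (Finset.Icc 1 n))
    (hint : RwiseIntersecting r t 𝓕) :
    𝓕.card ≤ ∑ i ∈ Finset.range (t + 1),
      Nat.choose t i *
        (if t + (r - 1) * i ≤ k then Nat.choose (n - t) (k - t - (r - 1) * i) else 0) := by
  have hr2 : 2 ≤ r := by omega
  suffices H : ∀ N : ℕ, ∀ 𝓖 : Finset (Finset ℕ), fam_wt 𝓖 ≤ N →
      𝓖 ⊆ Finset.powersetCard k (Finset.Icc 1 n) → RwiseIntersecting r t 𝓖 →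
      𝓖.card ≤ ∑ i ∈ Finset.range (t + 1),
        Nat.choose t i *
          (if t + (r - 1) * i ≤ k then Nat.choose (n - t) (k - t - (r - 1) * i) else 0) by
    exact H (fam_wt 𝓕) 𝓕 le_rfl h𝓕 hint
  intro N
  induction N using Nat.strong_induction_on with
  | _ N ihN =>
  intro 𝓖 hwt hsub hintG
  by_cases hsh : Shifted 𝓖
  · exact shifted_bound hr2 ht hn hsub hintG hsh
  · unfold Shifted at hsh
    push_neg at hsh
    obtain ⟨i, j, A, h1i, hij, hA, hjA, hiA, hnotin⟩ := hsh
    have hij' : i ≠ j := by omega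
    have hwlt : fam_wt (SwpFam i j 𝓖) < fam_wt 𝓖 :=
      Cmp_wt_lt hij ⟨A, hA, hjA, hiA, by rwa [cmp_of_pos hjA hiA]⟩
    have hres := ihN (fam_wt (SwpFam i j 𝓖)) (by omega) (SwpFam i j 𝓖) le_rfl
      (Cmp_powersetCard h1i hij hsub) (Cmp_rwise hij' hintG)
    rwa [Cmp_card hij'] at hres
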